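/- Let λ₀, λ₁, λ₂, λ₃ be four distinct complex numbers, and set M = (λ₁ − λ₃)/(λ₀ − λ₃) and N = (λ₁ − λ₂)/(λ₀ − λ₂). Let a, b, c, d denote the elementary symmetric polynomials of λ₀, λ₁, λ₂, λ₃ of degrees 1, 2, 3, 4 respectively, and let Δ = ∏_{0 ≤ i < j ≤ 3} (λᵢ − λⱼ)². Then (N² − MN + M²)³ · Δ = (1728d³ − 1296acd² + 432b²d² + 324a²c²d − 216ab²cd + 36b⁴d − 27a³c³ + 27a²b²c² − 9ab⁴c + b⁶) · M²N²(N − M)². Equivalently, 256(N² − MN + M²)³/(M²N²(N − M)²) equals 256(1728d³ − 1296acd² + 432b²d² + 324a²c²d − 216ab²cd + 36b⁴d − 27a³c³ + 27a²b²c² − 9ab⁴c + b⁶)/Δ. -/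

import Mathlib

set_option maxHeartbeats 2000000

theorem j_invariant_formula (l0 l1 l2 l3 : ℂ)
    (h01 : l0 ≠ l1) (h02 : l0 ≠ l2) (h03 : l0 ≠ l3)
    (h12 : l1 ≠ l2) (h13 : l1 ≠ l3) (h23 : l2 ≠ l3)
    (M N a b c d Δ : ℂ)
    (hM : M = (l1 - l3) / (l0 - l3)) (hN : N = (l1 - l2) / (l0 - l2))
    (ha : a = l0 + l1 + l2 + l3)
    (hb : b = l0*l1 + l0*l2 + l0*l3 + l1*l2 + l1*l3 + l2*l3)
    (hc : c = l0*l1*l2 + l0*l1*l3 + l0*l2*l3 + l1*l2*l3)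
    (hd : d = l0*l1*l2*l3)
    (hΔ : Δ = (l0-l1)^2 * (l0-l2)^2 * (l0-l3)^2 * (l1-l2)^2 * (l1-l3)^2 * (l2-l3)^2) :
    (N^2 - M*N + M^2)^3 * Δ =
      (1728*d^3 - 1296*a*c*d^2 + 432*b^2*d^2 + 324*a^2*c^2*d - 216*a*b^2*c*d + 36*b^4*d
        - 27*a^3*c^3 + 27*a^2*b^2*c^2 - 9*a*b^4*c + b^6) * (M^2 * N^2 * (N - M)^2) ∧
    256 * (N^2 - M*N + M^2)^3 / (M^2 * N^2 * (N - M)^2) =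
      256 * (1728*d^3 - 1296*a*c*d^2 + 432*b^2*d^2 + 324*a^2*c^2*d - 216*a*b^2*c*d + 36*b^4*d
        - 27*a^3*c^3 + 27*a^2*b^2*c^2 - 9*a*b^4*c + b^6) / Δ := by
  have e01 : l0 - l1 ≠ 0 := sub_ne_zero.mpr h01
  have e02 : l0 - l2 ≠ 0 := sub_ne_zero.mpr h02
  have e03 : l0 - l3 ≠ 0 := sub_ne_zero.mpr h03
  have e12 : l1 - l2 ≠ 0 := sub_ne_zero.mpr h12
  have e13 : l1 - l3 ≠ 0 := sub_ne_zero.mpr h13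
  have e23 : l2 - l3 ≠ 0 := sub_ne_zero.mpr h23
  obtain ⟨p, hp⟩ : ∃ p : ℂ,
      p = (l1-l2)^2*(l0-l3)^2 - (l1-l2)*(l0-l2)*(l1-l3)*(l0-l3) + (l1-l3)^2*(l0-l2)^2 :=
    ⟨_, rfl⟩
  obtain ⟨r, hr⟩ : ∃ r : ℂ,
      r = 1728*d^3 - 1296*a*c*d^2 + 432*b^2*d^2 + 324*a^2*c^2*d - 216*a*b^2*c*d + 36*b^4*d
        - 27*a^3*c^3 + 27*a^2*b^2*c^2 - 9*a*b^4*c + b^6 := ⟨_, rfl⟩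
  have key : p ^ 3 = r := by
    rw [hp, hr, ha, hb, hc, hd]; ring
  have hbase : N^2 - M*N + M^2 = p / ((l0-l2)^2 * (l0-l3)^2) := by
    rw [hp, hM, hN]; field_simp
  have hprod : M^2 * N^2 * (N - M)^2 =
      ((l1-l3)*(l1-l2)*(l0-l1)*(l2-l3))^2 / ((l0-l2)^2 * (l0-l3)^2)^2 := by
    rw [hM, hN]; field_simp; ring
  have hΔ' : Δ = ((l1-l3)*(l1-l2)*(l0-l1)*(l2-l3))^2 * ((l0-l2)^2 * (l0-l3)^2) := by
    rw [hΔ]; ring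
  have h1 : (N^2 - M*N + M^2)^3 * Δ =
      (1728*d^3 - 1296*a*c*d^2 + 432*b^2*d^2 + 324*a^2*c^2*d - 216*a*b^2*c*d + 36*b^4*d
        - 27*a^3*c^3 + 27*a^2*b^2*c^2 - 9*a*b^4*c + b^6) * (M^2 * N^2 * (N - M)^2) := by
    rw [hbase, hprod, hΔ', ← hr, ← key]
    field_simp
  refine ⟨h1, ?_⟩
  have hMne : M ≠ 0 := by rw [hM]; exact div_ne_zero e13 e03
  have hNne : N ≠ 0 := by rw [hN]; exact div_ne_zero e12 e02
  have hNM : N - M ≠ 0 := by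
    rw [hM, hN, div_sub_div _ _ e02 e03]
    apply div_ne_zero _ (mul_ne_zero e02 e03)
    have h : (l1 - l2) * (l0 - l3) - (l0 - l2) * (l1 - l3) = (l0 - l1) * (l3 - l2) := by ring
    rw [h]
    exact mul_ne_zero e01 (sub_ne_zero.mpr (Ne.symm h23))
  have hΔne : Δ ≠ 0 := by
    rw [hΔ]
    exact mul_ne_zero (mul_ne_zero (mul_ne_zero (mul_ne_zero (mul_ne_zero
      (pow_ne_zero 2 e01) (pow_ne_zero 2 e02)) (pow_ne_zero 2 e03))
      (pow_ne_zero 2 e12)) (pow_ne_zero 2 e13)) (pow_ne_zero 2 e23)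
  rw [div_eq_div_iff (mul_ne_zero (mul_ne_zero (pow_ne_zero 2 hMne) (pow_ne_zero 2 hNne)) (pow_ne_zero 2 hNM)) hΔne]
  linear_combination 256 * h1
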